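/- Suppose all connectives in 𝒞 are monotonic. Let K = ⟨W, ⪯, D, I⟩ be a constant-domain Kripke model with common domain D, and let w ∈ W. Let M_{K,w} = ⟨D, J⟩ be the classical model with J(p) = I(w,p) for every predicate symbol p. Then for every first-order formula α over 𝒞 and every assignment ρ in D, ‖α‖_{K,w}^ρ = ⟦α⟧_{M_{K,w}}^ρ. -/
import Mathlib


open Classical


/-- First-order formulas over a set `C` of propositional connectives
(each `c : C` has arity `ar c`).  Individual variables and, for each arity `n`,
the `n`-ary predicate symbols are indexed by `ℕ`. -/
inductive Formula (C : Type) (ar : C → ℕ) : Type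
  | atom (n : ℕ) (p : ℕ) (v : Fin n → ℕ)
  | conn (c : C) (args : Fin (ar c) → Formula C ar)
  | all (x : ℕ) (φ : Formula C ar)
  | ex  (x : ℕ) (φ : Formula C ar)

/-- A classical first-order model: a nonempty domain `D` (a set in an ambient
type `U`) together with an interpretation of every `n`-ary predicate symbol. -/
structure CModel where
  U : Type
  D : Set U
  D_ne : D.Nonempty
  I : (n : ℕ) → ℕ → (Fin n → U) → Bool

/-- Classical interpretation of a formula (value in `{0,1}`, coded by `Bool`),
where `tf c` is the truth function of the connective `c`. -/
noncomputable def cVal {C : Type} {ar : C → ℕ}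
    (tf : (c : C) → (Fin (ar c) → Bool) → Bool) (M : CModel) :
    Formula C ar → (ℕ → M.U) → Bool
  | .atom n p v, ρ => M.I n p (fun i => ρ (v i))
  | .conn c args, ρ => tf c (fun i => cVal tf M (args i) ρ)
  | .all x φ, ρ => decide (∀ a ∈ M.D, cVal tf M φ (Function.update ρ x a) = true)
  | .ex x φ, ρ => decide (∃ a ∈ M.D, cVal tf M φ (Function.update ρ x a) = true)

/-- A first-order Kripke model: a nonempty preordered set of worlds `W`,
monotone nonempty domains `D w` (sets in an ambient type `U`), and hereditary
interpretations of the predicate symbols. -/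
structure KModel where
  W : Type
  W_ne : Nonempty W
  R : W → W → Prop
  refl : ∀ w, R w w
  trans : ∀ {w v u}, R w v → R v u → R w u
  U : Type
  D : W → Set U
  D_ne : ∀ w, (D w).Nonempty
  D_mono : ∀ {w v}, R w v → D w ⊆ D v
  I : W → (n : ℕ) → ℕ → (Fin n → U) → Bool
  hered : ∀ {w v}, R w v → ∀ n p (a : Fin n → U),
      (∀ i, a i ∈ D w) → I w n p a = true → I v n p a = true

/-- Kripke interpretation of a formula at a world (value in `{0,1}`). -/
noncomputable def kVal {C : Type} {ar : C → ℕ}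
    (tf : (c : C) → (Fin (ar c) → Bool) → Bool) (K : KModel) :
    Formula C ar → K.W → (ℕ → K.U) → Bool
  | .atom n p v, w, ρ => K.I w n p (fun i => ρ (v i))
  | .conn c args, w, ρ =>
      decide (∀ u, K.R w u → tf c (fun i => kVal tf K (args i) u ρ) = true)
  | .all x φ, w, ρ =>
      decide (∀ u, K.R w u → ∀ a ∈ K.D u,
        kVal tf K φ u (Function.update ρ x a) = true)
  | .ex x φ, w, ρ =>
      decide (∃ a ∈ K.D w, kVal tf K φ w (Function.update ρ x a) = true)

/-- A Kripke model has constant domains. -/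
def ConstDom (K : KModel) : Prop := ∀ w v : K.W, K.D w = K.D v

/-- The sequent `Γ ⟹ Δ` is valid in all classical models (`Γ ⟹ Δ ∈ FOCLS(𝒞)`):
at every classical model and assignment into the domain, its interpretation is 1,
i.e. it is never the case that everything in `Γ` gets 1 and everything in `Δ` gets 0. -/
def SeqCValid {C : Type} {ar : C → ℕ} (tf : (c : C) → (Fin (ar c) → Bool) → Bool)
    (Γ Δ : Set (Formula C ar)) : Prop :=
  ∀ M : CModel, ∀ ρ : ℕ → M.U, (∀ x, ρ x ∈ M.D) →
    ¬ ((∀ φ ∈ Γ, cVal tf M φ ρ = true) ∧ (∀ φ ∈ Δ, cVal tf M φ ρ = false))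

/-- The sequent `Γ ⟹ Δ` is valid in all constant-domain Kripke models
(`Γ ⟹ Δ ∈ FOCDS(𝒞)`). -/
def SeqCDValid {C : Type} {ar : C → ℕ} (tf : (c : C) → (Fin (ar c) → Bool) → Bool)
    (Γ Δ : Set (Formula C ar)) : Prop :=
  ∀ K : KModel, ConstDom K → ∀ w : K.W, ∀ ρ : ℕ → K.U, (∀ x, ρ x ∈ K.D w) →
    ¬ ((∀ φ ∈ Γ, kVal tf K φ w ρ = true) ∧ (∀ φ ∈ Δ, kVal tf K φ w ρ = false))

/-- A truth function is monotonic. -/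
def MonoTF {n : ℕ} (f : (Fin n → Bool) → Bool) : Prop :=
  ∀ a b : Fin n → Bool, (∀ i, a i ≤ b i) → f a ≤ f b

/-- Propositional formulas over `C`: built from propositional symbols
(indexed by `ℕ`) by the connectives in `C`. -/
inductive PFormula (C : Type) (ar : C → ℕ) : Type
  | atom (p : ℕ)
  | conn (c : C) (args : Fin (ar c) → PFormula C ar)

/-- Value of a propositional formula under a classical valuation `v`. -/
def pcVal {C : Type} {ar : C → ℕ} (tf : (c : C) → (Fin (ar c) → Bool) → Bool)
    (v : ℕ → Bool) : PFormula C ar → Bool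
  | .atom p => v p
  | .conn c args => tf c (fun i => pcVal tf v (args i))

/-- A propositional Kripke model. -/
structure PKModel where
  W : Type
  W_ne : Nonempty W
  R : W → W → Prop
  refl : ∀ w, R w w
  trans : ∀ {w v u}, R w v → R v u → R w u
  I : W → ℕ → Bool
  hered : ∀ {w v}, R w v → ∀ p, I w p = true → I v p = true

/-- Kripke interpretation of a propositional formula at a world. -/
noncomputable def pkVal {C : Type} {ar : C → ℕ}
    (tf : (c : C) → (Fin (ar c) → Bool) → Bool) (K : PKModel) :
    PFormula C ar → K.W → Bool
  | .atom p, w => K.I w p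
  | .conn c args, w =>
      decide (∀ u, K.R w u → tf c (fun i => pkVal tf K (args i) u) = true)

/-- The propositional sequent `Γ ⟹ Δ` is valid under all classical valuations
(`Γ ⟹ Δ ∈ CLS(𝒞)`). -/
def PSeqCValid {C : Type} {ar : C → ℕ} (tf : (c : C) → (Fin (ar c) → Bool) → Bool)
    (Γ Δ : Set (PFormula C ar)) : Prop :=
  ∀ v : ℕ → Bool,
    ¬ ((∀ φ ∈ Γ, pcVal tf v φ = true) ∧ (∀ φ ∈ Δ, pcVal tf v φ = false))

/-- The propositional sequent `Γ ⟹ Δ` is valid at all worlds of all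
propositional Kripke models (`Γ ⟹ Δ ∈ ILS(𝒞)`). -/
def PSeqKValid {C : Type} {ar : C → ℕ} (tf : (c : C) → (Fin (ar c) → Bool) → Bool)
    (Γ Δ : Set (PFormula C ar)) : Prop :=
  ∀ K : PKModel, ∀ w : K.W,
    ¬ ((∀ φ ∈ Γ, pkVal tf K φ w = true) ∧ (∀ φ ∈ Δ, pkVal tf K φ w = false))

/-- The formula `α` is classically valid (`α ∈ FOCL(𝒞)`). -/
def FmlCValid {C : Type} {ar : C → ℕ} (tf : (c : C) → (Fin (ar c) → Bool) → Bool)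
    (α : Formula C ar) : Prop :=
  ∀ M : CModel, ∀ ρ : ℕ → M.U, (∀ x, ρ x ∈ M.D) → cVal tf M α ρ = true

/-- The formula `α` is CD-valid (`α ∈ FOCD(𝒞)`): valid in all constant-domain
Kripke models. -/
def FmlCDValid {C : Type} {ar : C → ℕ} (tf : (c : C) → (Fin (ar c) → Bool) → Bool)
    (α : Formula C ar) : Prop :=
  ∀ K : KModel, ConstDom K → ∀ w : K.W, ∀ ρ : ℕ → K.U, (∀ x, ρ x ∈ K.D w) →
    kVal tf K α w ρ = true

/-- `α` is a propositional formula built only from propositional symbols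
(0-ary predicate symbols) and the connective `c`. -/
inductive IsPropC {C : Type} {ar : C → ℕ} (c : C) : Formula C ar → Prop
  | atom (p : ℕ) (v : Fin 0 → ℕ) : IsPropC c (.atom 0 p v)
  | conn (args : Fin (ar c) → Formula C ar) :
      (∀ i, IsPropC c (args i)) → IsPropC c (.conn c args)

/-- A propositional formula viewed as a first-order formula (propositional
symbols become 0-ary predicate symbols). -/
def PFormula.toFO {C : Type} {ar : C → ℕ} : PFormula C ar → Formula C ar
  | .atom p => .atom 0 p (fun i => i.elim0)
  | .conn c args => .conn c (fun i => (args i).toFO)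

lemma kVal_hered {C : Type} {ar : C → ℕ} (tf : (c : C) → (Fin (ar c) → Bool) → Bool)
    (K : KModel) (hcd : ConstDom K) (α : Formula C ar) :
    ∀ (w v : K.W) (ρ : ℕ → K.U), K.R w v → (∀ x, ρ x ∈ K.D w) →
      kVal tf K α w ρ = true → kVal tf K α v ρ = true := by
  induction α with
  | atom n p vs =>
    intro w v ρ h hρ hw
    exact K.hered h n p _ (fun i => hρ _) hw
  | conn c args ih =>
    intro w v ρ h hρ hw
    simp only [kVal, decide_eq_true_eq] at hw ⊢
    exact fun u hu => hw u (K.trans h hu)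
  | all x φ ih =>
    intro w v ρ h hρ hw
    simp only [kVal, decide_eq_true_eq] at hw ⊢
    exact fun u hu => hw u (K.trans h hu)
  | ex x φ ih =>
    intro w v ρ h hρ hw
    simp only [kVal, decide_eq_true_eq] at hw ⊢
    obtain ⟨a, ha, hv⟩ := hw
    have ha' : a ∈ K.D v := (hcd w v) ▸ ha
    have hρ' : ∀ y, Function.update ρ x a y ∈ K.D w := by
      intro y; rcases eq_or_ne y x with rfl | hne
      · simpa using ha
      · simpa [Function.update_of_ne hne] using hρ y
    exact ⟨a, ha', ih w v _ h hρ' hv⟩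

/-- if all connectives are monotonic, `K` is a constant-domain
Kripke model and `w` a world, then the Kripke interpretation at `w` coincides
with the classical interpretation in the model `M_{K,w} = ⟨D, I(w,·)⟩`. -/
theorem stmt_5 (C : Type) (ar : C → ℕ) (tf : (c : C) → (Fin (ar c) → Bool) → Bool)
    (hmono : ∀ c : C, MonoTF (tf c)) (K : KModel) (hcd : ConstDom K) (w : K.W)
    (α : Formula C ar) (ρ : ℕ → K.U) (hρ : ∀ x, ρ x ∈ K.D w) :
    kVal tf K α w ρ =
      cVal tf (CModel.mk K.U (K.D w) (K.D_ne w) (K.I w)) α ρ := by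
  induction α generalizing ρ with
  | atom n p vs => rfl
  | conn c args ih =>
    simp only [kVal, cVal]
    have hargs : ∀ i, kVal tf K (args i) w ρ = cVal tf ⟨K.U, K.D w, K.D_ne w, K.I w⟩ (args i) ρ :=
      fun i => ih i ρ hρ
    by_cases h : tf c (fun i => kVal tf K (args i) w ρ) = true
    · have key : ∀ u, K.R w u → tf c (fun i => kVal tf K (args i) u ρ) = true := by
        intro u hu
        have hle : ∀ i, kVal tf K (args i) w ρ ≤ kVal tf K (args i) u ρ := by
          intro i
          rcases Bool.eq_false_or_eq_true (kVal tf K (args i) w ρ) with ht | hf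
          · simp [kVal_hered tf K hcd (args i) w u ρ hu hρ ht]
          · simp [hf]
        have h2 := hmono c _ _ hle
        rw [h] at h2
        exact Bool.le_iff_imp.mp h2 rfl
      simp only [← hargs]
      rw [h, decide_eq_true_eq]
      exact key
    · have : ¬ ∀ u, K.R w u → tf c (fun i => kVal tf K (args i) u ρ) = true := by
        intro hall
        exact h (hall w (K.refl w))
      rw [decide_eq_false this]
      simp only [← hargs]
      exact (Bool.eq_false_iff.mpr h).symm
  | all x φ ih =>
    simp only [kVal, cVal, decide_eq_decide]
    constructor
    · intro h a ha
      have hρ' : ∀ y, Function.update ρ x a y ∈ K.D w := by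
        intro y; rcases eq_or_ne y x with rfl | hne
        · simpa using ha
        · simpa [Function.update_of_ne hne] using hρ y
      rw [← ih _ hρ']
      exact h w (K.refl w) a ha
    · intro h u hu a ha
      have ha' : a ∈ K.D w := (hcd u w) ▸ ha
      have hρ' : ∀ y, Function.update ρ x a y ∈ K.D w := by
        intro y; rcases eq_or_ne y x with rfl | hne
        · simpa using ha'
        · simpa [Function.update_of_ne hne] using hρ y
      exact kVal_hered tf K hcd φ w u _ hu hρ' (by rw [ih _ hρ']; exact h a ha')
  | ex x φ ih =>
    simp only [kVal, cVal, decide_eq_decide]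
    constructor
    · rintro ⟨a, ha, hv⟩
      have hρ' : ∀ y, Function.update ρ x a y ∈ K.D w := by
        intro y; rcases eq_or_ne y x with rfl | hne
        · simpa using ha
        · simpa [Function.update_of_ne hne] using hρ y
      exact ⟨a, ha, by rw [← ih _ hρ']; exact hv⟩
    · rintro ⟨a, ha, hv⟩
      have hρ' : ∀ y, Function.update ρ x a y ∈ K.D w := by
        intro y; rcases eq_or_ne y x with rfl | hne
        · simpa using ha
        · simpa [Function.update_of_ne hne] using hρ y
      exact ⟨a, ha, by rw [ih _ hρ']; exact hv⟩
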